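/- arXiv:1310.1362 — 5 statements merged into one kernel-verified Lean document; each statement's English description precedes it below -/
import Mathlib

section
/- Let X ⊂ ℙV be a variety, p ∈ ℙV a point with p ∉ X. If I_k(X) (the degree-k part of the ideal of X) is zero, then I_k(J(X,p)) is zero, and I_{k+1}(J(X,p)) = I_{k+1}(X) ∩ S^{k+1}(p^⊥), where p^⊥ ⊂ V* is the hyperplane of linear forms vanishing at p. -/
open MvPolynomial Polynomial

/-- Evaluation of a homogeneous polynomial at a scalar multiple. -/
lemma evalSmulHom {N n : ℕ} {P : MvPolynomial (Fin N) ℂ} (hP : P.IsHomogeneous n)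
    (c : ℂ) (x : Fin N → ℂ) :
    MvPolynomial.eval (c • x) P = c ^ n * MvPolynomial.eval x P := by
  rw [MvPolynomial.eval_eq, MvPolynomial.eval_eq, Finset.mul_sum]
  apply Finset.sum_congr rfl
  intro d hd
  have hdeg : ∑ i ∈ d.support, d i = n := by
    by_contra h
    exact (MvPolynomial.mem_support_iff.mp hd) (hP.coeff_eq_zero h)
  calc P.coeff d * ∏ i ∈ d.support, (c • x) i ^ d i
      = P.coeff d * ((c ^ ∑ i ∈ d.support, d i) * ∏ i ∈ d.support, x i ^ d i) := by
        rw [← Finset.prod_pow_eq_pow_sum, ← Finset.prod_mul_distrib]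
        simp [mul_pow]
    _ = c ^ n * (P.coeff d * ∏ i ∈ d.support, x i ^ d i) := by rw [hdeg]; ring

/-- A polynomial in one variable `t` over multivariate polynomials is `good` for degree `n`
if its `t^i`-coefficient is homogeneous of degree `n - i` and vanishes for `i > n`. -/
def goodP (N n : ℕ) (q : Polynomial (MvPolynomial (Fin N) ℂ)) : Prop :=
  ∀ i : ℕ, ((q.coeff i).IsHomogeneous (n - i)) ∧ (n < i → q.coeff i = 0)

lemma goodP_C {N n : ℕ} {Q : MvPolynomial (Fin N) ℂ} (hQ : Q.IsHomogeneous n) :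
    goodP N n (Polynomial.C Q) := by
  intro i
  rcases Nat.eq_zero_or_pos i with rfl | hi
  · simpa using hQ
  · rw [Polynomial.coeff_C, if_neg hi.ne']
    exact ⟨MvPolynomial.isHomogeneous_zero _ _ _, fun _ => rfl⟩

lemma goodP_mul {N m n : ℕ} {q r : Polynomial (MvPolynomial (Fin N) ℂ)}
    (hq : goodP N m q) (hr : goodP N n r) : goodP N (m + n) (q * r) := by
  intro i
  rw [Polynomial.coeff_mul]
  constructor
  · apply MvPolynomial.IsHomogeneous.sum
    rintro ⟨a, b⟩ hab
    have hab' : a + b = i := Finset.HasAntidiagonal.mem_antidiagonal.mp hab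
    by_cases ha : m < a
    · rw [(hq a).2 ha, zero_mul]; exact MvPolynomial.isHomogeneous_zero _ _ _
    · by_cases hb : n < b
      · rw [(hr b).2 hb, mul_zero]; exact MvPolynomial.isHomogeneous_zero _ _ _
      · have : (m - a) + (n - b) = m + n - i := by omega
        exact this ▸ ((hq a).1.mul (hr b).1)
  · intro hi
    apply Finset.sum_eq_zero
    rintro ⟨a, b⟩ hab
    have hab' : a + b = i := Finset.HasAntidiagonal.mem_antidiagonal.mp hab
    by_cases ha : m < a
    · rw [(hq a).2 ha, zero_mul]
    · rw [(hr b).2 (by omega), mul_zero]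

lemma goodP_prod {N : ℕ} {ι : Type*} (s : Finset ι)
    (f : ι → Polynomial (MvPolynomial (Fin N) ℂ)) (n : ι → ℕ)
    (h : ∀ j ∈ s, goodP N (n j) (f j)) :
    goodP N (∑ j ∈ s, n j) (∏ j ∈ s, f j) := by
  classical
  induction s using Finset.induction_on with
  | empty => simpa using goodP_C (MvPolynomial.isHomogeneous_one _ _)
  | insert a s' hns ih =>
    rw [Finset.sum_insert hns, Finset.prod_insert hns]
    exact goodP_mul (h a (Finset.mem_insert_self _ _))
      (ih fun j hj => h j (Finset.mem_insert_of_mem hj))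

lemma goodP_pow {N m : ℕ} {q : Polynomial (MvPolynomial (Fin N) ℂ)}
    (hq : goodP N m q) (j : ℕ) : goodP N (m * j) (q ^ j) := by
  have := goodP_prod (Finset.range j) (fun _ => q) (fun _ => m) (fun _ _ => hq)
  simpa [Finset.prod_const, mul_comm] using this

lemma goodP_sum {N n : ℕ} {ι : Type*} (s : Finset ι)
    (f : ι → Polynomial (MvPolynomial (Fin N) ℂ))
    (h : ∀ j ∈ s, goodP N n (f j)) : goodP N n (∑ j ∈ s, f j) := by
  classical
  induction s using Finset.induction_on with
  | empty => simpa using goodP_C (MvPolynomial.isHomogeneous_zero _ _ n)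
  | insert a s' hns ih =>
    rw [Finset.sum_insert hns]
    intro i
    have h1 := h a (Finset.mem_insert_self _ _) i
    have h2 := ih (fun j hj => h j (Finset.mem_insert_of_mem hj)) i
    rw [Polynomial.coeff_add]
    exact ⟨h1.1.add h2.1, fun hi => by rw [h1.2 hi, h2.2 hi, add_zero]⟩

/-- The substitution `X_j ↦ X_j + t p_j`. -/
noncomputable def coneGen (N : ℕ) (p : Fin N → ℂ) (j : Fin N) :
    Polynomial (MvPolynomial (Fin N) ℂ) :=
  Polynomial.C (MvPolynomial.X j) + Polynomial.C (MvPolynomial.C (p j)) * Polynomial.X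

lemma goodP_gen (N : ℕ) (p : Fin N → ℂ) (j : Fin N) : goodP N 1 (coneGen N p j) := by
  intro i
  match i with
  | 0 =>
    refine ⟨?_, by omega⟩
    simpa [coneGen] using MvPolynomial.isHomogeneous_X ℂ j
  | 1 =>
    refine ⟨?_, by omega⟩
    simpa [coneGen] using MvPolynomial.isHomogeneous_C (Fin N) (p j)
  | (m+2) =>
    have : (coneGen N p j).coeff (m+2) = 0 := by
      simp [coneGen, Polynomial.coeff_C]
    exact ⟨this ▸ MvPolynomial.isHomogeneous_zero _ _ _, fun _ => this⟩

lemma keyA (N : ℕ) (p : Fin N → ℂ) (P : MvPolynomial (Fin N) ℂ) (v : Fin N → ℂ) (t : ℂ) :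
    Polynomial.eval t (Polynomial.map (MvPolynomial.eval v)
      (MvPolynomial.aeval (coneGen N p) P)) = MvPolynomial.eval (v + t • p) P := by
  induction P using MvPolynomial.induction_on with
  | C a => simp [coneGen]
  | add q r hq hr => simp [map_add, hq, hr]
  | mul_X q j hq =>
    rw [map_mul, Polynomial.map_mul, Polynomial.eval_mul, hq, MvPolynomial.aeval_X,
      MvPolynomial.eval_mul, MvPolynomial.eval_X]
    congr 1
    simp only [coneGen, Polynomial.map_add, Polynomial.map_mul, Polynomial.map_C,
      Polynomial.map_X, Polynomial.eval_add, Polynomial.eval_mul, Polynomial.eval_C,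
      Polynomial.eval_X, MvPolynomial.eval_X, MvPolynomial.eval_C]
    simp [Pi.add_apply, Pi.smul_apply, smul_eq_mul, mul_comm]

lemma goodP_aeval {N n : ℕ} (p : Fin N → ℂ) {P : MvPolynomial (Fin N) ℂ}
    (hP : P.IsHomogeneous n) : goodP N n (MvPolynomial.aeval (coneGen N p) P) := by
  classical
  rw [← MvPolynomial.support_sum_monomial_coeff P, map_sum]
  apply goodP_sum
  intro a ha
  have hdeg : ∑ j ∈ a.support, a j = n := by
    by_contra h
    exact (MvPolynomial.mem_support_iff.mp ha) (hP.coeff_eq_zero h)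
  rw [MvPolynomial.aeval_monomial]
  have h1 : goodP N 0 ((algebraMap ℂ (Polynomial (MvPolynomial (Fin N) ℂ))) (P.coeff a)) := by
    have : (algebraMap ℂ (Polynomial (MvPolynomial (Fin N) ℂ))) (P.coeff a)
        = Polynomial.C (MvPolynomial.C (P.coeff a)) := by
      rw [Polynomial.algebraMap_apply, MvPolynomial.algebraMap_eq]
    rw [this]
    exact goodP_C (MvPolynomial.isHomogeneous_C _ _)
  have h2 : goodP N (∑ j ∈ a.support, a j) (a.prod fun j e => coneGen N p j ^ e) := by
    rw [Finsupp.prod]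
    apply goodP_prod
    intro j _
    simpa using goodP_pow (goodP_gen N p j) (a j)
  have := goodP_mul h1 h2
  rw [zero_add, hdeg] at this
  exact this

theorem cone_over_point_low_degree_ideal (N k : ℕ) (X : Set (Fin N → ℂ))
    (p : Fin N → ℂ) (hp : p ≠ 0) (hpX : p ∉ X)
    (hIk : ∀ Q : MvPolynomial (Fin N) ℂ, Q.IsHomogeneous k →
      (∀ x ∈ X, MvPolynomial.eval x Q = 0) → Q = 0) :
    (∀ Q : MvPolynomial (Fin N) ℂ, Q.IsHomogeneous k →
      (∀ v : Fin N → ℂ, (∃ x ∈ X, ∃ s t : ℂ, v = s • x + t • p) →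
        MvPolynomial.eval v Q = 0) → Q = 0) ∧
    (∀ P : MvPolynomial (Fin N) ℂ, P.IsHomogeneous (k + 1) →
      ((∀ v : Fin N → ℂ, (∃ x ∈ X, ∃ s t : ℂ, v = s • x + t • p) →
          MvPolynomial.eval v P = 0) ↔
        ((∀ x ∈ X, MvPolynomial.eval x P = 0) ∧
          ∀ v : Fin N → ℂ, ∀ t : ℂ,
            MvPolynomial.eval (v + t • p) P = MvPolynomial.eval v P))) := by
  classical
  obtain ⟨j0, hj0⟩ : ∃ j, p j ≠ 0 := by
    by_contra h
    push_neg at h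
    exact hp (funext h)
  constructor
  · intro Q hQ hvan
    exact hIk Q hQ fun x hx => hvan x ⟨x, hx, 1, 0, by simp⟩
  · intro P hP
    constructor
    · intro hvan
      have hXv : ∀ x ∈ X, MvPolynomial.eval x P = 0 := fun x hx =>
        hvan x ⟨x, hx, 1, 0, by simp⟩
      refine ⟨hXv, ?_⟩
      have hgood := goodP_aeval p hP
      have hcoeff0 : ∀ i : ℕ, 0 < i → (MvPolynomial.aeval (coneGen N p) P).coeff i = 0 := by
        intro i hi
        by_cases hik : k + 1 < i
        · exact (hgood i).2 hik
        · have hhom := (hgood i).1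
          have hvanX : ∀ x ∈ X,
              MvPolynomial.eval x ((MvPolynomial.aeval (coneGen N p) P).coeff i) = 0 := by
            intro x hx
            have hq : Polynomial.map (MvPolynomial.eval x)
                (MvPolynomial.aeval (coneGen N p) P) = 0 := by
              apply Polynomial.funext
              intro t
              rw [keyA, Polynomial.eval_zero]
              exact hvan _ ⟨x, hx, 1, t, by simp⟩
            have := congrArg (fun q => Polynomial.coeff q i) hq
            simpa [Polynomial.coeff_map] using this
          have hQhom : (MvPolynomial.X j0 ^ (i - 1) *
              (MvPolynomial.aeval (coneGen N p) P).coeff i).IsHomogeneous k := by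
            have hm := (MvPolynomial.isHomogeneous_X_pow j0 (i - 1)).mul hhom
            have : (i - 1) + (k + 1 - i) = k := by omega
            rwa [this] at hm
          have hQzero := hIk _ hQhom (fun x hx => by
            rw [MvPolynomial.eval_mul, hvanX x hx, mul_zero])
          have hXne : (MvPolynomial.X j0 : MvPolynomial (Fin N) ℂ) ^ (i - 1) ≠ 0 :=
            pow_ne_zero _ (MvPolynomial.X_ne_zero j0)
          exact (mul_eq_zero.mp hQzero).resolve_left hXne
      intro v t
      rw [← keyA N p P v t]
      have hC : Polynomial.map (MvPolynomial.eval v) (MvPolynomial.aeval (coneGen N p) P)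
          = Polynomial.C (MvPolynomial.eval v
              ((MvPolynomial.aeval (coneGen N p) P).coeff 0)) := by
        ext i
        match i with
        | 0 => simp [Polynomial.coeff_map]
        | (m+1) =>
          rw [Polynomial.coeff_map, hcoeff0 (m+1) (Nat.succ_pos m), map_zero,
            Polynomial.coeff_C, if_neg (Nat.succ_ne_zero m)]
      have h0 := keyA N p P v 0
      rw [hC] at h0 ⊢
      rw [Polynomial.eval_C]
      rw [Polynomial.eval_C] at h0
      rw [h0]
      simp
    · rintro ⟨hXv, hinv⟩ v ⟨x, hx, s, t, rfl⟩
      rw [hinv (s • x) t, evalSmulHom hP s x, hXv x hx, mul_zero]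
end

section
/- Let n, r be given with r ≤ n−2 and let S' = {x^1_1, ..., x^{n-r}_1} (the top n−r entries of the first column) and S = S' ∪ {x^{n-r+1}_1, ..., x^n_1} (the entire first column). Then the closure of the set of matrices expressible as (rank ≤ r) + (supported on S) equals the closure of the set of matrices expressible as (rank ≤ r) + (supported on S'): J(σ_r, L^S) = J(σ_r, L^{S'}). -/
set_option maxRecDepth 4000


/-- The Zariski closure of a set of `n × n` complex matrices: the common zero
locus of all polynomials (in the matrix entries) vanishing on the set. -/
def matrixZariskiClosure {n : ℕ} (Z : Set (Matrix (Fin n) (Fin n) ℂ)) :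
    Set (Matrix (Fin n) (Fin n) ℂ) :=
  {M | ∀ P : MvPolynomial (Fin n × Fin n) ℂ,
    (∀ A ∈ Z, MvPolynomial.eval (fun p => A p.1 p.2) P = 0) →
    MvPolynomial.eval (fun p => M p.1 p.2) P = 0}

lemma matrixZariskiClosure_mono {n : ℕ} {Z₁ Z₂ : Set (Matrix (Fin n) (Fin n) ℂ)}
    (h : Z₁ ⊆ Z₂) : matrixZariskiClosure Z₁ ⊆ matrixZariskiClosure Z₂ := by
  intro M hM P hP
  exact hM P (fun A hA => hP A (h hA))

lemma matrixZariskiClosure_le {n : ℕ} {Z₁ Z₂ : Set (Matrix (Fin n) (Fin n) ℂ)}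
    (h : Z₁ ⊆ matrixZariskiClosure Z₂) :
    matrixZariskiClosure Z₁ ⊆ matrixZariskiClosure Z₂ := by
  intro M hM P hP
  exact hM P (fun A hA => h hA P hP)

/-- Rank factorization: a matrix of rank at most `r` factors through `ℂ^r`. -/
lemma rank_factorization {n r : ℕ} (A : Matrix (Fin n) (Fin n) ℂ) (h : A.rank ≤ r) :
    ∃ (U : Matrix (Fin n) (Fin r) ℂ) (W : Matrix (Fin r) (Fin n) ℂ), A = U * W := by
  classical
  set R := LinearMap.range A.mulVecLin with hR
  have hk : Module.finrank ℂ R ≤ r := h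
  set k := Module.finrank ℂ R with hkdef
  let b : Module.Basis (Fin k) ℂ R := Module.finBasis ℂ R
  have hcol : ∀ j : Fin n, (fun i => A i j) ∈ R := by
    intro j
    refine ⟨Pi.single j 1, ?_⟩
    ext i
    simp [Matrix.mulVecLin_apply, Matrix.mulVec, dotProduct, Pi.single_apply]
  let col : Fin n → R := fun j => ⟨fun i => A i j, hcol j⟩
  let U : Matrix (Fin n) (Fin r) ℂ :=
    fun i l => if hl : (l : ℕ) < k then ((b ⟨l, hl⟩ : Fin n → ℂ) i) else 0
  let W : Matrix (Fin r) (Fin n) ℂ :=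
    fun l j => if hl : (l : ℕ) < k then b.repr (col j) ⟨l, hl⟩ else 0
  refine ⟨U, W, ?_⟩
  ext i j
  have hrepr : (col j : Fin n → ℂ) = ∑ l : Fin k, b.repr (col j) l • (b l : Fin n → ℂ) := by
    conv_lhs => rw [← b.sum_repr (col j)]
    push_cast
    simp
  have hAij : A i j = ∑ l : Fin k, b.repr (col j) l * (b l : Fin n → ℂ) i := by
    have := congrFun hrepr i
    simpa [col, Finset.sum_apply] using this
  rw [Matrix.mul_apply, hAij]
  symm
  -- turn the sum over `Fin r` into a sum over `Fin k`
  let g : ℕ → ℂ := fun m => if hm : m < k then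
      ((b ⟨m, hm⟩ : Fin n → ℂ) i) * b.repr (col j) ⟨m, hm⟩ else 0
  have h1 : ∀ l : Fin r, U i l * W l j = g (l : ℕ) := by
    intro l
    by_cases hl : (l : ℕ) < k <;> simp [U, W, g, hl]
  calc ∑ l : Fin r, U i l * W l j = ∑ l : Fin r, g (l : ℕ) :=
        Finset.sum_congr rfl (fun l _ => h1 l)
    _ = ∑ m ∈ Finset.range r, g m := Fin.sum_univ_eq_sum_range g r
    _ = ∑ m ∈ Finset.range k, g m := by
        refine (Finset.sum_subset (Finset.range_subset_range.2 hk) ?_).symm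
        intro x _ hx
        simp only [Finset.mem_range, not_lt] at hx
        simp [g, Nat.not_lt.2 hx]
    _ = ∑ l : Fin k, g (l : ℕ) := (Fin.sum_univ_eq_sum_range g k).symm
    _ = ∑ l : Fin k, b.repr (col j) l * (b l : Fin n → ℂ) i := by
        refine Finset.sum_congr rfl (fun l _ => ?_)
        simp [g, l.2, mul_comm, Fin.eta]

/-- Lemma: changes along the whole first column are absorbed by changes along
its top `n - r` entries, i.e. `J(σ_r, L^S) = J(σ_r, L^{S'})`. -/
theorem join_first_column_autoelimination (n r : ℕ) [NeZero n] (hr : r ≤ n - 2) :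
    matrixZariskiClosure
      {M : Matrix (Fin n) (Fin n) ℂ | ∃ A B, M = A + B ∧ A.rank ≤ r ∧
        ∀ i j : Fin n, ¬(j = 0) → B i j = 0} =
    matrixZariskiClosure
      {M : Matrix (Fin n) (Fin n) ℂ | ∃ A B, M = A + B ∧ A.rank ≤ r ∧
        ∀ i j : Fin n, ¬(j = 0 ∧ (i : ℕ) < n - r) → B i j = 0} := by
  classical
  set Z₁ : Set (Matrix (Fin n) (Fin n) ℂ) :=
    {M | ∃ A B, M = A + B ∧ A.rank ≤ r ∧ ∀ i j : Fin n, ¬(j = 0) → B i j = 0} with hZ₁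
  set Z₂ : Set (Matrix (Fin n) (Fin n) ℂ) :=
    {M | ∃ A B, M = A + B ∧ A.rank ≤ r ∧
      ∀ i j : Fin n, ¬(j = 0 ∧ (i : ℕ) < n - r) → B i j = 0} with hZ₂
  apply Set.Subset.antisymm
  · -- hard direction: Z₁ ⊆ closure Z₂
    apply matrixZariskiClosure_le
    rintro M ⟨A, B, hM, hA, hB⟩
    intro P hP
    obtain ⟨U, W, hUW⟩ := rank_factorization A hA
    -- the shift map into the bottom `r` rows
    have hκ : ∀ k : Fin r, n - r + (k : ℕ) < n := by
      intro k
      have := k.2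
      omega
    let κ : Fin r → Fin n := fun k => ⟨n - r + (k : ℕ), hκ k⟩
    have hκinj : Function.Injective κ := by
      intro a b hab
      have : n - r + (a : ℕ) = n - r + (b : ℕ) := congrArg Fin.val hab
      exact Fin.ext (by omega)
    let E : Matrix (Fin n) (Fin r) ℂ := fun i k => if i = κ k then 1 else 0
    let C0 : Matrix (Fin n) (Fin n) ℂ := E * W
    let Mt : ℂ → Matrix (Fin n) (Fin n) ℂ := fun t => M + t • C0
    let Ub : Matrix (Fin r) (Fin r) ℂ := fun j k => U (κ j) k
    -- the determinant polynomial
    let p : Polynomial ℂ := (-Ub).charpoly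
    have hp0 : p ≠ 0 := (Matrix.charpoly_monic _).ne_zero
    have hpeval : ∀ t : ℂ, p.eval t = (Ub + t • (1 : Matrix (Fin r) (Fin r) ℂ)).det := by
      intro t
      have h1 : p.eval t = (Polynomial.evalRingHom t) ((Matrix.charmatrix (-Ub)).det) := rfl
      rw [h1, RingHom.map_det]
      congr 1
      ext i j
      by_cases hij : i = j
      · subst hij
        simp [Matrix.charmatrix_apply_eq, Matrix.add_apply, Matrix.smul_apply,
          Matrix.one_apply_eq, Matrix.neg_apply]
        ring
      · simp [Matrix.charmatrix_apply_ne _ _ _ hij, Matrix.add_apply, Matrix.smul_apply,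
          Matrix.one_apply_ne hij, Matrix.neg_apply]
    -- for generic t, `Mt t ∈ Z₂`
    have hkey : ∀ t : ℂ, (Ub + t • (1 : Matrix (Fin r) (Fin r) ℂ)).det ≠ 0 → Mt t ∈ Z₂ := by
      intro t ht
      set Ut : Matrix (Fin n) (Fin r) ℂ := U + t • E with hUt
      set Ubt : Matrix (Fin r) (Fin r) ℂ := Ub + t • (1 : Matrix (Fin r) (Fin r) ℂ) with hUbt
      have hUbt_entry : ∀ j k : Fin r, Ut (κ j) k = Ubt j k := by
        intro j k
        simp only [hUt, hUbt, Matrix.add_apply, Matrix.smul_apply, Matrix.one_apply,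
          smul_eq_mul]
        simp only [E, Ub]
        by_cases hjk : j = k
        · subst hjk; simp
        · rw [if_neg (fun h => hjk (hκinj h)), if_neg hjk]
      have hdet : IsUnit Ubt.det := isUnit_iff_ne_zero.2 ht
      let vb : Fin r → ℂ := fun k => B (κ k) 0
      let c : Fin r → ℂ := Ubt⁻¹.mulVec vb
      let w : Fin n → ℂ := Ut.mulVec c
      have hw : ∀ j : Fin r, w (κ j) = B (κ j) 0 := by
        intro j
        have h1 : w (κ j) = Ubt.mulVec c j := by
          simp only [w, Matrix.mulVec, dotProduct]
          exact Finset.sum_congr rfl (fun k _ => by rw [hUbt_entry j k])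
        rw [h1]
        have : Ubt.mulVec (Ubt⁻¹.mulVec vb) = vb := by
          rw [Matrix.mulVec_mulVec, Matrix.mul_nonsing_inv _ hdet, Matrix.one_mulVec]
        rw [show c = Ubt⁻¹.mulVec vb from rfl, this]
      let Wc : Matrix (Fin r) (Fin n) ℂ := fun k j => if j = 0 then c k else 0
      refine ⟨Ut * (W + Wc), (fun i j => if j = (0 : Fin n) then B i 0 - w i else 0), ?_, ?_, ?_⟩
      · -- decomposition
        ext i j
        have hUtW : (Ut * W) i j = (U * W) i j + t * C0 i j := by
          simp only [hUt, Matrix.add_mul, Matrix.smul_mul, Matrix.add_apply,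
            Matrix.smul_apply, C0, smul_eq_mul]
        have hUtWc : (Ut * Wc) i j = if j = 0 then w i else 0 := by
          simp only [Matrix.mul_apply]
          simp only [Wc]
          by_cases hj : j = 0
          · simp only [hj, if_pos rfl]
            simp [w, Matrix.mulVec, dotProduct]
          · simp [hj]
        rw [Matrix.add_apply (Ut * (W + Wc)) (fun i j => if j = (0 : Fin n) then B i 0 - w i else 0)]
        simp only [Mt, Matrix.add_apply, Matrix.smul_apply, smul_eq_mul, Matrix.mul_add,
          hUtW, hUtWc]
        by_cases hj : j = 0
        · subst hj
          have : M i 0 = A i 0 + B i 0 := by rw [hM]; rfl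
          rw [this, hUW]
          rw [if_pos rfl, if_pos rfl]
          ring
        · have h1 : M i j = A i j + B i j := by rw [hM]; rfl
          have h2 : B i j = 0 := hB i j hj
          rw [h1, h2, hUW]
          simp [hj]
      · -- rank bound
        calc (Ut * (W + Wc)).rank ≤ Ut.rank := Matrix.rank_mul_le_left _ _
          _ ≤ Fintype.card (Fin r) := Matrix.rank_le_card_width Ut
          _ = r := Fintype.card_fin r
      · -- support of the correction
        intro i j hij
        by_cases hj : j = 0
        · subst hj
          have hi : ¬ ((i : ℕ) < n - r) := fun h => hij ⟨rfl, h⟩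
          have hi' : n - r ≤ (i : ℕ) := Nat.not_lt.1 hi
          have hi2 := i.2
          have hir : (i : ℕ) - (n - r) < r := by omega
          let j0 : Fin r := ⟨(i : ℕ) - (n - r), hir⟩
          have hκj0 : κ j0 = i := Fin.ext (by simp [κ, j0]; omega)
          simp only [if_pos rfl]
          rw [← hκj0, hw j0]
          simp
        · simp [hj]
    -- the one-variable polynomial obtained by substituting the line `Mt`
    let φ : Fin n × Fin n → Polynomial ℂ := fun pp =>
      Polynomial.C (M pp.1 pp.2) + Polynomial.C (C0 pp.1 pp.2) * Polynomial.X
    let q : Polynomial ℂ := MvPolynomial.aeval φ P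
    have hqeval : ∀ t : ℂ, q.eval t = MvPolynomial.eval (fun pp => Mt t pp.1 pp.2) P := by
      intro t
      have hcomp : (Polynomial.evalRingHom t).comp
          ((MvPolynomial.aeval φ : MvPolynomial (Fin n × Fin n) ℂ →ₐ[ℂ] Polynomial ℂ) :
            MvPolynomial (Fin n × Fin n) ℂ →+* Polynomial ℂ) =
          (MvPolynomial.eval (fun pp => Mt t pp.1 pp.2) :
            MvPolynomial (Fin n × Fin n) ℂ →+* ℂ) := by
        apply MvPolynomial.ringHom_ext
        · intro a
          simp only [RingHom.coe_comp, Function.comp_apply, MvPolynomial.eval_C,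
            RingHom.coe_coe, MvPolynomial.aeval_C]
          simp
        · intro pp
          simp only [RingHom.coe_comp, Function.comp_apply, RingHom.coe_coe,
            MvPolynomial.aeval_X, MvPolynomial.eval_X]
          simp only [φ, Mt, Polynomial.coe_evalRingHom, Polynomial.eval_add,
            Polynomial.eval_mul, Polynomial.eval_C, Polynomial.eval_X, Matrix.add_apply,
            Matrix.smul_apply, smul_eq_mul]
          ring
      have := congrFun (congrArg DFunLike.coe hcomp) P
      simpa [q] using this
    have hq0 : q = 0 := by
      apply Polynomial.eq_zero_of_infinite_isRoot
      have hfin : Set.Finite {t : ℂ | p.IsRoot t} := Polynomial.finite_setOf_isRoot hp0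
      have hsub : {t : ℂ | p.IsRoot t}ᶜ ⊆ {t : ℂ | q.IsRoot t} := by
        intro t ht
        have hdet : (Ub + t • (1 : Matrix (Fin r) (Fin r) ℂ)).det ≠ 0 := by
          rw [← hpeval t]; exact ht
        have hmem := hkey t hdet
        have := hP (Mt t) hmem
        simpa [Polynomial.IsRoot, hqeval t] using this
      exact Set.Infinite.mono hsub (Set.Finite.infinite_compl hfin)
    have := hqeval 0
    rw [hq0] at this
    have hMt0 : Mt 0 = M := by simp [Mt]
    rw [hMt0] at this
    simpa using this.symm
  · -- easy direction: Z₂ ⊆ Z₁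
    apply matrixZariskiClosure_mono
    rintro M ⟨A, B, hM, hA, hB⟩
    exact ⟨A, B, hM, hA, fun i j hj => hB i j (fun h => hj h.1)⟩
end

section
/- For n = 3, r = 1 and S = {x^1_1, x^2_2, x^3_3}: the polynomial x^2_1 x^3_2 x^1_3 − x^1_2 x^2_3 x^3_1 vanishes on every 3×3 complex matrix of the form A + D where rank(A) ≤ 1 and D is diagonal. -/
open Matrix Module Submodule

lemma minor_eq_zero_of_rank_le_one (A : Matrix (Fin 3) (Fin 3) ℂ) (hA : A.rank ≤ 1)
    (i1 i2 j1 j2 : Fin 3) :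
    A i1 j1 * A i2 j2 - A i1 j2 * A i2 j1 = 0 := by
  by_contra h
  set x : Fin 3 → ℂ := fun k => A k j1 with hx
  set y : Fin 3 → ℂ := fun k => A k j2 with hy
  have hli : LinearIndependent ℂ ![x, y] := by
    rw [LinearIndependent.pair_iff]
    intro s t hst
    have h1 : s * A i1 j1 + t * A i1 j2 = 0 := congrFun hst i1
    have h2 : s * A i2 j1 + t * A i2 j2 = 0 := congrFun hst i2
    constructor
    · by_contra hs
      apply h
      have : s * (A i1 j1 * A i2 j2 - A i1 j2 * A i2 j1) = 0 := by
        linear_combination A i2 j2 * h1 - A i1 j2 * h2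
      rcases mul_eq_zero.mp this with this | this
      · exact absurd this hs
      · exact this
    · by_contra ht
      apply h
      have : t * (A i1 j1 * A i2 j2 - A i1 j2 * A i2 j1) = 0 := by
        linear_combination A i1 j1 * h2 - A i2 j1 * h1
      rcases mul_eq_zero.mp this with this | this
      · exact absurd this ht
      · exact this
  have hxmem : x ∈ LinearMap.range A.mulVecLin := by
    refine ⟨Pi.single j1 1, ?_⟩
    ext k
    simp [mulVecLin, mulVec, dotProduct, Pi.single_apply, hx]
  have hymem : y ∈ LinearMap.range A.mulVecLin := by
    refine ⟨Pi.single j2 1, ?_⟩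
    ext k
    simp [mulVecLin, mulVec, dotProduct, Pi.single_apply, hy]
  have hspan : span ℂ (Set.range ![x, y]) ≤ LinearMap.range A.mulVecLin := by
    rw [span_le]
    rintro v ⟨i, rfl⟩
    fin_cases i <;> simpa using by assumption
  have h2le : 2 ≤ A.rank := by
    have hcard := finrank_span_eq_card hli
    have := Submodule.finrank_mono hspan
    rw [hcard] at this
    simpa [Matrix.rank] using this
  omega

theorem rank_one_plus_diagonal_equation (M A D : Matrix (Fin 3) (Fin 3) ℂ)
    (hM : M = A + D) (hA : A.rank ≤ 1)
    (hD : ∀ i j : Fin 3, i ≠ j → D i j = 0) :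
    M 1 0 * M 2 1 * M 0 2 - M 0 1 * M 1 2 * M 2 0 = 0 := by
  have e : ∀ i j : Fin 3, i ≠ j → M i j = A i j := by
    intro i j hij
    simp [hM, hD i j hij]
  rw [e 1 0 (by decide), e 2 1 (by decide), e 0 2 (by decide),
    e 0 1 (by decide), e 1 2 (by decide), e 2 0 (by decide)]
  have h1 := minor_eq_zero_of_rank_le_one A hA 1 2 0 1
  have h2 := minor_eq_zero_of_rank_le_one A hA 0 1 1 2
  linear_combination A 0 2 * h1 - A 2 0 * h2
end

section
/- Let n ≥ 2, let w ∈ ℂ, and let V(w) be the n×n Vandermonde matrix with entries V^i_j = (y_j)^{i-1} for variables y_1,...,y_n. For any k with 2 ≤ k ≤ n, any distinct rows i_1,...,i_k and columns j_1,...,j_k, and any k-cycle σ, the binomial x^{i_1}_{j_1}···x^{i_k}_{j_k} − x^{i_1}_{j_{σ(1)}}···x^{i_k}_{j_{σ(k)}} does not vanish identically on Vandermonde matrices: there exist values y_1,...,y_n making it nonzero. -/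
theorem vandermonde_not_in_cycle_binomial_hypersurface (n k : ℕ)
    (hn : 2 ≤ n) (hk2 : 2 ≤ k) (hkn : k ≤ n)
    (i j : Fin k → Fin n) (hi : Function.Injective i) (hj : Function.Injective j)
    (σ : Equiv.Perm (Fin k)) (hσ : σ.IsCycle) (hσsupp : σ.support = Finset.univ) :
    ∃ y : Fin n → ℂ,
      (∏ t : Fin k, y (j t) ^ ((i t : ℕ))) ≠
        ∏ t : Fin k, y (j (σ t)) ^ ((i t : ℕ)) := by
  have hk0 : 0 < k := by omega
  let t₀ : Fin k := ⟨0, hk0⟩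
  refine ⟨fun m => if m = j t₀ then 2 else 1, ?_⟩
  have hy : ∀ t : Fin k, (if j t = j t₀ then (2:ℂ) else 1) = if t = t₀ then 2 else 1 := by
    intro t
    by_cases h : t = t₀
    · simp [h]
    · rw [if_neg h, if_neg (fun hjt => h (hj hjt))]
  have hL : (∏ t : Fin k, (if j t = j t₀ then (2:ℂ) else 1) ^ ((i t : ℕ)))
      = 2 ^ ((i t₀ : ℕ)) := by
    rw [Finset.prod_congr rfl (fun t _ => by rw [hy t])]
    rw [Finset.prod_eq_single t₀]
    · simp
    · intro t _ ht; rw [if_neg ht, one_pow]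
    · simp
  have hR : (∏ t : Fin k, (if j (σ t) = j t₀ then (2:ℂ) else 1) ^ ((i t : ℕ)))
      = 2 ^ ((i (σ⁻¹ t₀) : ℕ)) := by
    rw [Finset.prod_congr rfl (fun t _ => by rw [hy (σ t)])]
    rw [Finset.prod_eq_single (σ⁻¹ t₀)]
    · simp
    · intro t _ ht
      rw [if_neg, one_pow]
      intro h
      exact ht (by rw [← h]; simp)
    · simp
  rw [hL, hR]
  have hne : σ⁻¹ t₀ ≠ t₀ := by
    have : t₀ ∈ σ.support := by rw [hσsupp]; exact Finset.mem_univ _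
    intro h
    have := Equiv.Perm.mem_support.mp this
    apply this
    have := congrArg σ h
    simpa using this.symm
  have hexp : ((i t₀ : ℕ)) ≠ ((i (σ⁻¹ t₀) : ℕ)) := by
    intro h
    exact hne (hi (Fin.ext h)).symm
  intro h
  apply hexp
  have h2 : (2:ℕ)^((i t₀ : ℕ)) = (2:ℕ)^((i (σ⁻¹ t₀) : ℕ)) := by exact_mod_cast h
  exact Nat.pow_right_injective le_rfl h2
end

section
/- Fix p prime and w ∈ ℂ*. The p×p matrix A with A^i_j = w^{(i-1)(j-1) mod p} (the DFT-curve matrix) satisfies Rig_1(A) ≤ p² − 3p + 3: changing the (1,1) entry to w^{-1} and changing every entry in the lower-right (p−1)×(p−1) submatrix to w yields a matrix of rank at most 1, and the number of entries changed is at most (p−1)² + 1 − (p−1) = p² − 3p + 3. -/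
theorem dft_curve_rigidity_bound (p : ℕ) (hp : p.Prime) (w : ℂ) (hw : w ≠ 0)
    (A : Matrix (Fin p) (Fin p) ℂ)
    (hA : ∀ i j : Fin p, A i j = w ^ (((i : ℕ) * (j : ℕ)) % p)) :
    ∃ B : Matrix (Fin p) (Fin p) ℂ, B.rank ≤ 1 ∧
      (Set.ncard {q : Fin p × Fin p | A q.1 q.2 ≠ B q.1 q.2} : ℤ) ≤
        (p : ℤ) ^ 2 - 3 * (p : ℤ) + 3 := by
  haveI := Fact.mk hp
  have hp2 : 2 ≤ p := hp.two_le
  haveI : NeZero p := ⟨by omega⟩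
  set f : Fin p → ℂ := fun i => if i = 0 then 1 else w with hf
  set g : Fin p → ℂ := fun j => if j = 0 then w⁻¹ else 1 with hg
  refine ⟨Matrix.vecMulVec f g, ?_, ?_⟩
  · rw [Matrix.vecMulVec_eq Unit]
    exact (Matrix.rank_mul_le_right _ _).trans
      ((Matrix.rank_le_card_height _).trans (by simp))
  · -- the inverse map
    set jinv : Fin p → Fin p := fun i => ⟨(((i : ℕ) : ZMod p))⁻¹.val, ZMod.val_lt _⟩
      with hjinv
    have hkey : ∀ i : Fin p, i ≠ 0 → ((i : ℕ) * ((jinv i : ℕ))) % p = 1 := by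
      intro i hi
      have hne : (((i : ℕ) : ZMod p)) ≠ 0 := by
        rw [Ne, ZMod.natCast_eq_zero_iff]
        intro hdvd
        exact hi (Fin.ext (Nat.eq_zero_of_dvd_of_lt hdvd i.isLt))
      have : ((i : ℕ) * ((jinv i : ℕ))) % p
          = ((((i : ℕ) : ZMod p)) * (((i : ℕ) : ZMod p))⁻¹).val := by
        rw [ZMod.val_mul, ZMod.val_cast_of_lt i.isLt]
      rw [this, mul_inv_cancel₀ hne, ZMod.val_one]
    have hjinv_ne : ∀ i : Fin p, i ≠ 0 → jinv i ≠ 0 := by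
      intro i hi h0
      have hne : (((i : ℕ) : ZMod p)) ≠ 0 := by
        rw [Ne, ZMod.natCast_eq_zero_iff]
        intro hdvd
        exact hi (Fin.ext (Nat.eq_zero_of_dvd_of_lt hdvd i.isLt))
      have : (((i : ℕ) : ZMod p))⁻¹.val = 0 := congrArg Fin.val h0
      exact inv_ne_zero hne ((ZMod.val_eq_zero _).1 this)
    -- explicit superset as a Finset
    set U : Finset (Fin p × Fin p) :=
      (Finset.univ.filter (fun i : Fin p => i ≠ 0)).biUnion
        (fun i => {i} ×ˢ (Finset.univ.filter
          (fun j : Fin p => j ≠ 0 ∧ ((i : ℕ) * (j : ℕ)) % p ≠ 1))) with hU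
    have hsub : {q : Fin p × Fin p | A q.1 q.2 ≠ Matrix.vecMulVec f g q.1 q.2}
        ⊆ ↑(insert ((0 : Fin p), (0 : Fin p)) U) := by
      intro q hq
      simp only [Set.mem_setOf_eq] at hq
      obtain ⟨i, j⟩ := q
      simp only [Finset.coe_insert, Set.mem_insert_iff, Finset.mem_coe,
        Finset.mem_biUnion, Finset.mem_filter, Finset.mem_univ, true_and,
        Finset.mem_product, Finset.mem_singleton, hU]
      by_cases hi : i = 0
      · by_cases hj : j = 0
        · left; simp [hi, hj]
        · exfalso; apply hq
          rw [hA, Matrix.vecMulVec_apply, hf, hg]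
          simp [hi, hj]
      · by_cases hj : j = 0
        · exfalso; apply hq
          rw [hA, Matrix.vecMulVec_apply, hf, hg]
          simp [hi, hj, hw]
        · right
          refine ⟨i, hi, rfl, hj, ?_⟩
          intro h1
          apply hq
          rw [hA, Matrix.vecMulVec_apply, hf, hg, h1]
          simp [hi, hj]
    have hcard : (insert ((0 : Fin p), (0 : Fin p)) U).card ≤ 1 + (p - 1) * (p - 2) := by
      refine (Finset.card_insert_le _ _).trans ?_
      have hU_card : U.card ≤ (p - 1) * (p - 2) := by
        refine (Finset.card_biUnion_le).trans ?_
        have hbound : ∀ i ∈ Finset.univ.filter (fun i : Fin p => i ≠ 0),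
            ({i} ×ˢ (Finset.univ.filter
              (fun j : Fin p => j ≠ 0 ∧ ((i : ℕ) * (j : ℕ)) % p ≠ 1))).card ≤ p - 2 := by
          intro i hi
          rw [Finset.mem_filter] at hi
          rw [Finset.card_product, Finset.card_singleton, one_mul]
          have hsub2 : Finset.univ.filter
              (fun j : Fin p => j ≠ 0 ∧ ((i : ℕ) * (j : ℕ)) % p ≠ 1)
              ⊆ Finset.univ \ {(0 : Fin p), jinv i} := by
            intro j hj
            rw [Finset.mem_filter] at hj
            rw [Finset.mem_sdiff]
            refine ⟨Finset.mem_univ _, ?_⟩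
            simp only [Finset.mem_insert, Finset.mem_singleton]
            rintro (h | h)
            · exact hj.2.1 h
            · exact hj.2.2 (by rw [h]; exact hkey i hi.2)
          refine (Finset.card_le_card hsub2).trans ?_
          rw [Finset.card_sdiff_of_subset (Finset.subset_univ _)]
          have : ({(0 : Fin p), jinv i} : Finset (Fin p)).card = 2 := by
            rw [Finset.card_insert_of_notMem (by
              simp only [Finset.mem_singleton]
              exact fun h => hjinv_ne i hi.2 h.symm), Finset.card_singleton]
          rw [this, Finset.card_univ, Fintype.card_fin]
        calc ∑ i ∈ Finset.univ.filter (fun i : Fin p => i ≠ 0),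
              ({i} ×ˢ (Finset.univ.filter
                (fun j : Fin p => j ≠ 0 ∧ ((i : ℕ) * (j : ℕ)) % p ≠ 1))).card
            ≤ ∑ _i ∈ Finset.univ.filter (fun i : Fin p => i ≠ 0), (p - 2) :=
              Finset.sum_le_sum hbound
          _ = (Finset.univ.filter (fun i : Fin p => i ≠ 0)).card * (p - 2) := by
              rw [Finset.sum_const, smul_eq_mul]
          _ ≤ (p - 1) * (p - 2) := by
              apply Nat.mul_le_mul_right
              have : (Finset.univ.filter (fun i : Fin p => i ≠ 0)) ⊆
                  Finset.univ \ {(0 : Fin p)} := by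
                intro x hx
                rw [Finset.mem_filter] at hx
                simp [hx.2]
              refine (Finset.card_le_card this).trans ?_
              rw [Finset.card_sdiff_of_subset (Finset.subset_univ _), Finset.card_singleton,
                Finset.card_univ, Fintype.card_fin]
      omega
    have hncard : Set.ncard {q : Fin p × Fin p | A q.1 q.2 ≠ Matrix.vecMulVec f g q.1 q.2}
        ≤ 1 + (p - 1) * (p - 2) := by
      refine le_trans ?_ hcard
      rw [← Set.ncard_coe_finset]
      exact Set.ncard_le_ncard hsub (Finset.finite_toSet _)
    have : ((1 + (p - 1) * (p - 2) : ℕ) : ℤ) = (p : ℤ) ^ 2 - 3 * (p : ℤ) + 3 := by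
      have h1 : ((p - 1 : ℕ) : ℤ) = (p : ℤ) - 1 := by
        rw [Nat.cast_sub (by omega)]; norm_num
      have h2 : ((p - 2 : ℕ) : ℤ) = (p : ℤ) - 2 := by
        rw [Nat.cast_sub (by omega)]; norm_num
      push_cast [h1, h2]
      ring
    calc (Set.ncard {q : Fin p × Fin p | A q.1 q.2 ≠ Matrix.vecMulVec f g q.1 q.2} : ℤ)
        ≤ ((1 + (p - 1) * (p - 2) : ℕ) : ℤ) := by exact_mod_cast hncard
      _ = (p : ℤ) ^ 2 - 3 * (p : ℤ) + 3 := this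
end
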